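/- Let M, H be d×d max-plus matrices with λ(H) ≤ 0, and suppose m ≥ d+1 and n ≥ d+1. With A and B the first components of (M,H)^m and (M,H)^n respectively, the keys satisfy K_a = A ⊕ B ⊕ H^{∘m} ⊕ (B ⊗ H^{∘m}) = A ⊕ B = (M ⊕ H) ⊗ H*. -/

import Mathlib

open Finset

abbrev Rmax : Type := WithBot ℝ

/-- Tropical (max-plus) matrix product. -/
noncomputable def trMul {l m n : ℕ} (A : Matrix (Fin l) (Fin m) Rmax) (B : Matrix (Fin m) (Fin n) Rmax) :
    Matrix (Fin l) (Fin n) Rmax :=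
  fun i j => univ.sup fun k => A i k + B k j

/-- Entrywise tropical sum (max) of matrices. -/
noncomputable def trSup {m n : ℕ} (A B : Matrix (Fin m) (Fin n) Rmax) : Matrix (Fin m) (Fin n) Rmax :=
  fun i j => A i j ⊔ B i j

/-- Tropical identity matrix. -/
noncomputable def trId (d : ℕ) : Matrix (Fin d) (Fin d) Rmax := fun i j => if i = j then 0 else ⊥

/-- Tropical matrix powers, `trPow A 0 = I`. -/
noncomputable def trPow {d : ℕ} (A : Matrix (Fin d) (Fin d) Rmax) : ℕ → Matrix (Fin d) (Fin d) Rmax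
  | 0 => trId d
  | n + 1 => trMul (trPow A n) A

/-- Adjoint product `A ∘ B = A ⊕ B ⊕ (A ⊗ B)`. -/
noncomputable def adj {d : ℕ} (A B : Matrix (Fin d) (Fin d) Rmax) : Matrix (Fin d) (Fin d) Rmax :=
  trSup (trSup A B) (trMul A B)

/-- Adjoint powers: `adjPow A n = A^{∘n}` for `n ≥ 1` (value at 0 is junk `A`). -/
noncomputable def adjPow {d : ℕ} (A : Matrix (Fin d) (Fin d) Rmax) : ℕ → Matrix (Fin d) (Fin d) Rmax
  | 0 => A
  | 1 => A
  | n + 2 => adj (adjPow A (n + 1)) A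

/-- Semidirect product of pairs:
`(M,G)·(A,H) = (M ⊕ A ⊕ H ⊕ (M ⊗ H), G ∘ H)`. -/
noncomputable def sd {d : ℕ} (p q : Matrix (Fin d) (Fin d) Rmax × Matrix (Fin d) (Fin d) Rmax) :
    Matrix (Fin d) (Fin d) Rmax × Matrix (Fin d) (Fin d) Rmax :=
  (trSup (trSup (trSup p.1 q.1) q.2) (trMul p.1 q.2), adj p.2 q.2)

/-- Semidirect powers: `sdPow p n = p^n` for `n ≥ 1` (value at 0 is junk `p`). -/
noncomputable def sdPow {d : ℕ} (p : Matrix (Fin d) (Fin d) Rmax × Matrix (Fin d) (Fin d) Rmax) :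
    ℕ → Matrix (Fin d) (Fin d) Rmax × Matrix (Fin d) (Fin d) Rmax
  | 0 => p
  | 1 => p
  | n + 2 => sd (sdPow p (n + 1)) p

/-- Maximum cycle mean `λ(F)`: maximum over cycles `(c 0, c 1, …, c k, c 0)` of
the average arc weight. -/
noncomputable def mcm {d : ℕ} (F : Matrix (Fin d) (Fin d) Rmax) : Rmax :=
  univ.sup fun kc : Σ k : Fin d, Fin (k.1 + 1) → Fin d =>
    (∑ i, F (kc.2 i) (kc.2 (i + 1))).map fun w => w / ((kc.1 : ℕ) + 1)

/-- Metric matrix `A⁺ = A ⊕ A^{⊗2} ⊕ ⋯ ⊕ A^{⊗d}`. -/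
noncomputable def metric {d : ℕ} (A : Matrix (Fin d) (Fin d) Rmax) : Matrix (Fin d) (Fin d) Rmax :=
  fun i j => (Finset.Icc 1 d).sup fun k => trPow A k i j

/-- Kleene star `A* = I ⊕ A ⊕ ⋯ ⊕ A^{⊗(d-1)}`. -/
noncomputable def kstar {d : ℕ} (A : Matrix (Fin d) (Fin d) Rmax) : Matrix (Fin d) (Fin d) Rmax :=
  fun i j => (Finset.range d).sup fun k => trPow A k i j

/-- `F` is irreducible: its weighted digraph is strongly connected. -/
def TrIrreducible {d : ℕ} (F : Matrix (Fin d) (Fin d) Rmax) : Prop :=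
  ∀ i j : Fin d, Relation.ReflTransGen (fun a b => F a b ≠ ⊥) i j

/-! ### Auxiliary development -/

lemma sup_add_rmax {α : Type*} (s : Finset α) (f : α → Rmax) (a : Rmax) :
    s.sup f + a = s.sup fun x => f x + a := by
  induction s using Finset.cons_induction with
  | empty => simp
  | cons b s hb ih => rw [Finset.sup_cons, Finset.sup_cons, ← ih, ← max_add_add_right]

lemma add_sup_rmax {α : Type*} (s : Finset α) (f : α → Rmax) (a : Rmax) :
    a + s.sup f = s.sup fun x => a + f x := by
  induction s using Finset.cons_induction with
  | empty => simp
  | cons b s hb ih => rw [Finset.sup_cons, Finset.sup_cons, ← ih, ← max_add_add_left]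

def mle {d : ℕ} (A B : Matrix (Fin d) (Fin d) Rmax) : Prop := ∀ i j, A i j ≤ B i j

lemma mle_refl {d : ℕ} (A : Matrix (Fin d) (Fin d) Rmax) : mle A A := fun _ _ => le_rfl

lemma mle_trans {d : ℕ} {A B C : Matrix (Fin d) (Fin d) Rmax} (h1 : mle A B) (h2 : mle B C) :
    mle A C := fun i j => (h1 i j).trans (h2 i j)

lemma mle_antisymm {d : ℕ} {A B : Matrix (Fin d) (Fin d) Rmax} (h1 : mle A B) (h2 : mle B A) :
    A = B := funext fun i => funext fun j => le_antisymm (h1 i j) (h2 i j)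

lemma le_trSup_l {d : ℕ} (A B : Matrix (Fin d) (Fin d) Rmax) : mle A (trSup A B) :=
  fun _ _ => le_sup_left

lemma le_trSup_r {d : ℕ} (A B : Matrix (Fin d) (Fin d) Rmax) : mle B (trSup A B) :=
  fun _ _ => le_sup_right

lemma trSup_mle {d : ℕ} {A B C : Matrix (Fin d) (Fin d) Rmax} (h1 : mle A C) (h2 : mle B C) :
    mle (trSup A B) C := fun i j => sup_le (h1 i j) (h2 i j)

lemma trSup_mono {d : ℕ} {A B A' B' : Matrix (Fin d) (Fin d) Rmax} (h1 : mle A A') (h2 : mle B B') :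
    mle (trSup A B) (trSup A' B') :=
  trSup_mle (mle_trans h1 (le_trSup_l _ _)) (mle_trans h2 (le_trSup_r _ _))

lemma trMul_mono {d : ℕ} {A B A' B' : Matrix (Fin d) (Fin d) Rmax} (h1 : mle A A') (h2 : mle B B') :
    mle (trMul A B) (trMul A' B') := by
  intro i j
  apply Finset.sup_le
  intro k _
  exact le_trans (add_le_add (h1 i k) (h2 k j))
    (Finset.le_sup (f := fun k => A' i k + B' k j) (mem_univ k))

lemma trMul_trSup_right {d : ℕ} (A B C : Matrix (Fin d) (Fin d) Rmax) :
    trMul (trSup A B) C = trSup (trMul A C) (trMul B C) := by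
  funext i j
  show (univ.sup fun k => (A i k ⊔ B i k) + C k j) =
    (univ.sup fun k => A i k + C k j) ⊔ (univ.sup fun k => B i k + C k j)
  simp only [← max_add_add_right]
  exact Finset.sup_sup

lemma trMul_trSup_left {d : ℕ} (A B C : Matrix (Fin d) (Fin d) Rmax) :
    trMul A (trSup B C) = trSup (trMul A B) (trMul A C) := by
  funext i j
  show (univ.sup fun k => A i k + (B k j ⊔ C k j)) =
    (univ.sup fun k => A i k + B k j) ⊔ (univ.sup fun k => A i k + C k j)
  simp only [← max_add_add_left]
  exact Finset.sup_sup

lemma trMul_assoc {d : ℕ} (A B C : Matrix (Fin d) (Fin d) Rmax) :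
    trMul (trMul A B) C = trMul A (trMul B C) := by
  funext i j
  show (univ.sup fun u => (univ.sup fun k => A i k + B k u) + C u j) =
    univ.sup fun k => A i k + univ.sup fun u => B k u + C u j
  simp only [sup_add_rmax, add_sup_rmax, add_assoc]
  exact Finset.sup_comm _ _ _

lemma trMul_id {d : ℕ} (A : Matrix (Fin d) (Fin d) Rmax) : trMul A (trId d) = A := by
  funext i j
  apply le_antisymm
  · apply Finset.sup_le
    intro k _
    show A i k + (if k = j then 0 else ⊥) ≤ A i j
    by_cases h : k = j
    · subst h; simp
    · simp [h]
  · have h := Finset.le_sup (f := fun k => A i k + trId d k j) (mem_univ j)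
    exact le_trans (le_of_eq (by simp [trId])) h

lemma id_trMul {d : ℕ} (A : Matrix (Fin d) (Fin d) Rmax) : trMul (trId d) A = A := by
  funext i j
  apply le_antisymm
  · apply Finset.sup_le
    intro k _
    show (if i = k then 0 else ⊥) + A k j ≤ A i j
    by_cases h : i = k
    · subst h; simp
    · simp [h]
  · have h := Finset.le_sup (f := fun k => trId d i k + A k j) (mem_univ i)
    exact le_trans (le_of_eq (by simp [trId])) h

lemma trPow_succ {d : ℕ} (H : Matrix (Fin d) (Fin d) Rmax) (k : ℕ) :
    trPow H (k + 1) = trMul (trPow H k) H := rfl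

lemma trPow_one {d : ℕ} (H : Matrix (Fin d) (Fin d) Rmax) : trPow H 1 = H := by
  rw [trPow_succ]
  show trMul (trId d) H = H
  exact id_trMul H

/-- Weight of the length-`k` walk `c 0, c 1, …, c k`. -/
noncomputable def W {d : ℕ} (H : Matrix (Fin d) (Fin d) Rmax) (c : ℕ → Fin d) (k : ℕ) : Rmax :=
  ∑ t ∈ range k, H (c t) (c (t + 1))

lemma W_le {d : ℕ} (H : Matrix (Fin d) (Fin d) Rmax) (c : ℕ → Fin d) (k : ℕ) :
    W H c k ≤ trPow H k (c 0) (c k) := by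
  induction k with
  | zero => simp [W, trPow, trId]
  | succ k ih =>
    rw [W, Finset.sum_range_succ, trPow_succ]
    refine le_trans (add_le_add_left ih _) ?_
    exact Finset.le_sup (f := fun u => trPow H k (c 0) u + H u (c (k + 1))) (mem_univ (c k))

lemma exists_path {d : ℕ} (H : Matrix (Fin d) (Fin d) Rmax) (k : ℕ) (i j : Fin d)
    (hb : trPow H k i j ≠ ⊥) :
    ∃ c : ℕ → Fin d, c 0 = i ∧ c k = j ∧ trPow H k i j ≤ W H c k := by
  induction k generalizing j with
  | zero =>
    have hij : i = j := by
      by_contra h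
      exact hb (by simp [trPow, trId, h])
    subst hij
    exact ⟨fun _ => i, rfl, rfl, by simp [W, trPow, trId]⟩
  | succ k ih =>
    obtain ⟨u, -, hu⟩ := Finset.exists_mem_eq_sup univ ⟨i, mem_univ i⟩
      (fun u => trPow H k i u + H u j)
    rw [trPow_succ] at hb ⊢
    have heq : trMul (trPow H k) H i j = trPow H k i u + H u j := hu
    have h1 : trPow H k i u ≠ ⊥ := by
      intro h
      rw [heq, h] at hb
      simp at hb
    obtain ⟨c, hc0, hck, hW⟩ := ih u h1
    set c' : ℕ → Fin d := fun t => if t ≤ k then c t else j with hc'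
    refine ⟨c', by simp [hc', hc0], by simp [hc'], ?_⟩
    have hWk : W H c' k = W H c k := by
      apply Finset.sum_congr rfl
      intro t ht
      rw [mem_range] at ht
      simp [hc', Nat.le_of_lt ht, Nat.succ_le_of_lt ht]
    have hsum : W H c' (k + 1) = W H c' k + H (c' k) (c' (k + 1)) := Finset.sum_range_succ _ k
    have hck' : c' k = u := by simp [hc', hck]
    have hck1 : c' (k + 1) = j := by simp [hc']
    rw [hsum, hWk, hck', hck1, heq]
    exact add_le_add_left hW _


lemma cycle_le {d : ℕ} {H : Matrix (Fin d) (Fin d) Rmax} (hH : mcm H ≤ 0) (c : ℕ → Fin d)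
    (p q : ℕ) (hpq : p < q) (hqd : q - p ≤ d) (hc : c p = c q) :
    ∑ t ∈ Ico p q, H (c t) (c (t + 1)) ≤ 0 := by
  obtain ⟨r, hr⟩ : ∃ r, q - p = r + 1 := ⟨q - p - 1, by omega⟩
  have hrd : r < d := by omega
  have hterm : ((∑ i : Fin (r + 1), H (c (p + i.val)) (c (p + ((i + 1 : Fin (r + 1))).val))).map
      (fun w : ℝ => w / ((r : ℝ) + 1))) ≤ 0 := by
    refine le_trans ?_ hH
    exact Finset.le_sup (f := fun kc : Σ k : Fin d, Fin (k.1 + 1) → Fin d =>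
      (∑ i, H (kc.2 i) (kc.2 (i + 1))).map fun w : ℝ => w / ((kc.1 : ℕ) + 1))
      (mem_univ ⟨⟨r, hrd⟩, fun t => c (p + t.val)⟩)
  have hS : (∑ i : Fin (r + 1), H (c (p + i.val)) (c (p + ((i + 1 : Fin (r + 1))).val)))
      = ∑ t ∈ Ico p q, H (c t) (c (t + 1)) := by
    have h1 : ∀ i : Fin (r + 1), H (c (p + i.val)) (c (p + ((i + 1 : Fin (r + 1))).val))
        = H (c (p + i.val)) (c (p + i.val + 1)) := by
      intro i
      rcases Nat.lt_or_ge i.val r with h | h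
      · have hv : ((i + 1 : Fin (r + 1))).val = i.val + 1 :=
          Fin.val_add_one_of_lt (by rw [Fin.lt_iff_val_lt_val, Fin.val_last]; exact h)
        rw [hv, ← Nat.add_assoc]
      · have hir : i.val = r := le_antisymm (Nat.le_of_lt_succ i.isLt) h
        have hi : i = Fin.last r := Fin.ext (by simp [hir])
        have h0 : ((i + 1 : Fin (r + 1))).val = 0 := by rw [hi, Fin.last_add_one]; rfl
        rw [h0]
        congr 1
        rw [Nat.add_zero, show p + i.val + 1 = q by omega]
        exact hc
    rw [Finset.sum_congr rfl fun i _ => h1 i]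
    rw [Fin.sum_univ_eq_sum_range (fun t => H (c (p + t)) (c (p + t + 1))) (r + 1)]
    rw [Finset.sum_Ico_eq_sum_range (fun t => H (c t) (c (t + 1))) p q, hr]
  rw [hS] at hterm
  rcases hs : (∑ t ∈ Ico p q, H (c t) (c (t + 1))) with _ | w
  · exact bot_le
  · rw [hs] at hterm
    have hw : w / ((r : ℝ) + 1) ≤ 0 := by
      have h2 : ((w / ((r : ℝ) + 1) : ℝ) : Rmax) ≤ ((0 : ℝ) : Rmax) := hterm
      exact_mod_cast h2
    have hrpos : (0 : ℝ) < (r : ℝ) + 1 := by positivity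
    have hw0 : w ≤ 0 := by
      have h3 := (div_le_iff₀ hrpos).mp hw
      simpa using h3
    show (w : Rmax) ≤ 0
    exact_mod_cast hw0

lemma absorb {d : ℕ} {H : Matrix (Fin d) (Fin d) Rmax} (hH : mcm H ≤ 0) :
    ∀ k (i j : Fin d), trPow H k i j ≤ kstar H i j := by
  intro k
  induction k using Nat.strong_induction_on with
  | _ k ih =>
  intro i j
  by_cases hk : k < d
  · exact Finset.le_sup (f := fun r => trPow H r i j) (mem_range.mpr hk)
  push_neg at hk
  by_cases hb : trPow H k i j = ⊥
  · rw [hb]; exact bot_le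
  obtain ⟨c, hc0, hck, hW⟩ := exists_path H k i j hb
  obtain ⟨a, b, hab, hfab⟩ := Fintype.exists_ne_map_eq_of_card_lt
    (fun t : Fin (d + 1) => c t.val) (by simp)
  have hvne : a.val ≠ b.val := fun h => hab (Fin.ext h)
  set p := min a.val b.val with hp
  set q := max a.val b.val with hq
  have hpq : p < q := by omega
  have hqd : q ≤ d := by
    have h1 := a.isLt
    have h2 := b.isLt
    omega
  have hqk : q ≤ k := le_trans hqd hk
  have hcpq : c p = c q := by
    rcases le_total a.val b.val with h | h
    · rw [hp, hq, min_eq_left h, max_eq_right h]; exact hfab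
    · rw [hp, hq, min_eq_right h, max_eq_left h]; exact hfab.symm
  set k' := k - (q - p) with hk'def
  set c' : ℕ → Fin d := fun t => if t ≤ p then c t else c (t + (q - p)) with hc'
  have hge : ∀ t, p ≤ t → c' t = c (t + (q - p)) := by
    intro t ht
    by_cases h : t ≤ p
    · have htp : t = p := le_antisymm h ht
      subst htp
      rw [hc']
      simp only [le_refl, if_pos]
      rw [hcpq]
      congr 1
      omega
    · rw [hc']; simp [h]
  have h0 : c' 0 = i := by
    rw [hc']
    simp only [Nat.zero_le, if_pos]
    exact hc0
  have hpk' : p ≤ k' := by omega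
  have hk'c : c' k' = j := by
    rw [hge k' hpk', show k' + (q - p) = k by omega]
    exact hck
  set f : ℕ → Rmax := fun t => H (c t) (c (t + 1)) with hf
  set g : ℕ → Rmax := fun t => H (c' t) (c' (t + 1)) with hg
  have hsplit : W H c k = (∑ t ∈ range p, f t + ∑ t ∈ Ico p q, f t) + ∑ t ∈ Ico q k, f t := by
    show ∑ t ∈ range k, f t = _
    rw [add_assoc, Finset.sum_Ico_consecutive f (le_of_lt hpq) hqk,
      Finset.sum_range_add_sum_Ico f (le_trans (le_of_lt hpq) hqk)]
  have hW1 : ∑ t ∈ range p, g t = ∑ t ∈ range p, f t := by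
    apply Finset.sum_congr rfl
    intro t ht
    rw [mem_range] at ht
    rw [hg, hf]
    simp only
    rw [hc']
    simp [Nat.le_of_lt ht, Nat.succ_le_of_lt ht]
  have hW2 : ∑ t ∈ Ico p k', g t = ∑ t ∈ Ico q k, f t := by
    rw [Finset.sum_Ico_eq_sum_range g p k', Finset.sum_Ico_eq_sum_range f q k,
      show k' - p = k - q by omega]
    apply Finset.sum_congr rfl
    intro t _
    rw [hg, hf]
    simp only
    rw [hge (p + t) (by omega), hge (p + t + 1) (by omega),
      show p + t + (q - p) = q + t by omega, show p + t + 1 + (q - p) = q + t + 1 by omega]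
  have hWc' : W H c' k' = ∑ t ∈ range p, f t + ∑ t ∈ Ico q k, f t := by
    show ∑ t ∈ range k', g t = _
    rw [← Finset.sum_range_add_sum_Ico g hpk', hW1, hW2]
  have hcyc : ∑ t ∈ Ico p q, f t ≤ 0 := cycle_le hH c p q hpq (by omega) hcpq
  have hle : W H c k ≤ W H c' k' := by
    rw [hsplit, hWc', add_right_comm]
    calc ∑ t ∈ range p, f t + ∑ t ∈ Ico q k, f t + ∑ t ∈ Ico p q, f t
        ≤ ∑ t ∈ range p, f t + ∑ t ∈ Ico q k, f t + 0 := add_le_add_right hcyc _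
      _ = ∑ t ∈ range p, f t + ∑ t ∈ Ico q k, f t := add_zero _
  have hk'lt : k' < k := by omega
  exact le_trans hW (le_trans hle (le_trans (W_le H c' k')
    (by rw [h0, hk'c]; exact ih k' hk'lt i j)))

lemma kstar_diag {d : ℕ} (H : Matrix (Fin d) (Fin d) Rmax) (j : Fin d) :
    (0 : Rmax) ≤ kstar H j j := by
  have h : trPow H 0 j j ≤ kstar H j j :=
    Finset.le_sup (f := fun r => trPow H r j j) (mem_range.mpr j.pos)
  simpa [trPow, trId] using h

lemma mul_kstar_entry {d : ℕ} (C H : Matrix (Fin d) (Fin d) Rmax) (i j : Fin d) :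
    trMul C (kstar H) i j = (range d).sup fun r => trMul C (trPow H r) i j := by
  show (univ.sup fun u => C i u + (range d).sup fun r => trPow H r u j) = _
  simp only [add_sup_rmax]
  exact Finset.sup_comm _ _ _

lemma M_le_E {d : ℕ} (M H : Matrix (Fin d) (Fin d) Rmax) :
    mle M (trMul (trSup M H) (kstar H)) := by
  intro i j
  calc M i j = M i j + 0 := (add_zero _).symm
    _ ≤ (M i j ⊔ H i j) + kstar H j j := add_le_add le_sup_left (kstar_diag H j)
    _ ≤ trMul (trSup M H) (kstar H) i j :=
        Finset.le_sup (f := fun u => trSup M H i u + kstar H u j) (mem_univ j)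

lemma H_le_E {d : ℕ} (M H : Matrix (Fin d) (Fin d) Rmax) :
    mle H (trMul (trSup M H) (kstar H)) := by
  intro i j
  calc H i j = H i j + 0 := (add_zero _).symm
    _ ≤ (M i j ⊔ H i j) + kstar H j j := add_le_add le_sup_right (kstar_diag H j)
    _ ≤ trMul (trSup M H) (kstar H) i j :=
        Finset.le_sup (f := fun u => trSup M H i u + kstar H u j) (mem_univ j)

lemma kstar_mul_H {d : ℕ} {H : Matrix (Fin d) (Fin d) Rmax} (hH : mcm H ≤ 0) :
    mle (trMul (kstar H) H) (kstar H) := by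
  intro i j
  apply Finset.sup_le
  intro u _
  show ((range d).sup fun r => trPow H r i u) + H u j ≤ kstar H i j
  rw [sup_add_rmax]
  apply Finset.sup_le
  intro r _
  have h1 : trPow H r i u + H u j ≤ trPow H (r + 1) i j :=
    Finset.le_sup (f := fun u' => trPow H r i u' + H u' j) (mem_univ u)
  exact le_trans h1 (absorb hH (r + 1) i j)

lemma E_mul_H {d : ℕ} {M H : Matrix (Fin d) (Fin d) Rmax} (hH : mcm H ≤ 0) :
    mle (trMul (trMul (trSup M H) (kstar H)) H) (trMul (trSup M H) (kstar H)) := by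
  rw [trMul_assoc]
  exact trMul_mono (mle_refl _) (kstar_mul_H hH)

lemma sdPow_two_unfold {d : ℕ} (M H : Matrix (Fin d) (Fin d) Rmax) (k : ℕ) :
    (sdPow (M, H) (k + 2)).1 =
      trSup (trSup (trSup ((sdPow (M, H) (k + 1)).1) M) H)
        (trMul ((sdPow (M, H) (k + 1)).1) H) := rfl

lemma X_le_E {d : ℕ} {M H : Matrix (Fin d) (Fin d) Rmax} (hH : mcm H ≤ 0) :
    ∀ k, mle ((sdPow (M, H) k).1) (trMul (trSup M H) (kstar H)) := by
  intro k
  induction k using Nat.twoStepInduction with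
  | zero => exact M_le_E M H
  | one => exact M_le_E M H
  | more k ih1 ih2 =>
    rw [sdPow_two_unfold]
    exact trSup_mle (trSup_mle (trSup_mle ih2 (M_le_E M H)) (H_le_E M H))
      (mle_trans (trMul_mono ih2 (mle_refl H)) (E_mul_H hH))

lemma X_succ_le {d : ℕ} (M H : Matrix (Fin d) (Fin d) Rmax) (k : ℕ) :
    mle ((sdPow (M, H) (k + 1)).1) ((sdPow (M, H) (k + 2)).1) := by
  rw [sdPow_two_unfold]
  exact mle_trans (le_trSup_l _ M) (mle_trans (le_trSup_l _ H) (le_trSup_l _ _))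

lemma X_chain {d : ℕ} (M H : Matrix (Fin d) (Fin d) Rmax) (a : ℕ) :
    ∀ b, mle ((sdPow (M, H) (a + 1)).1) ((sdPow (M, H) (a + 1 + b)).1) := by
  intro b
  induction b with
  | zero => exact mle_refl _
  | succ b ih =>
    have h2 := X_succ_le M H (a + b)
    rw [show a + 1 + (b + 1) = a + b + 2 by omega]
    rw [show a + 1 + b = a + b + 1 by omega] at ih
    exact mle_trans ih h2

lemma pow_le_X {d : ℕ} (M H : Matrix (Fin d) (Fin d) Rmax) :
    ∀ r, mle (trMul (trSup M H) (trPow H r)) ((sdPow (M, H) (r + 2)).1) := by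
  intro r
  induction r with
  | zero =>
    have h1 : trMul (trSup M H) (trPow H 0) = trSup M H := trMul_id _
    rw [h1, sdPow_two_unfold]
    refine trSup_mle ?_ ?_
    · exact mle_trans (le_trSup_r _ M) (mle_trans (le_trSup_l _ H) (le_trSup_l _ _))
    · exact mle_trans (le_trSup_r _ H) (le_trSup_l _ _)
  | succ r ih =>
    have h1 : trMul (trSup M H) (trPow H (r + 1)) =
        trMul (trMul (trSup M H) (trPow H r)) H := by
      rw [trPow_succ, trMul_assoc]
    rw [h1, sdPow_two_unfold]
    exact mle_trans (trMul_mono ih (mle_refl H)) (le_trSup_r _ _)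

lemma E_le_X {d : ℕ} (M H : Matrix (Fin d) (Fin d) Rmax) (k : ℕ) (hk : d + 1 ≤ k) :
    mle (trMul (trSup M H) (kstar H)) ((sdPow (M, H) k).1) := by
  intro i j
  rw [mul_kstar_entry]
  apply Finset.sup_le
  intro r hr
  rw [mem_range] at hr
  have h1 := pow_le_X M H r
  have h2 := X_chain M H (r + 1) (k - (r + 2))
  rw [show r + 1 + 1 = r + 2 by omega] at h2
  rw [show r + 1 + 1 + (k - (r + 2)) = k by omega] at h2
  exact (mle_trans h1 h2) i j

lemma adjPow_le_E {d : ℕ} {M H : Matrix (Fin d) (Fin d) Rmax} (hH : mcm H ≤ 0) :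
    ∀ k, mle (adjPow H k) (trMul (trSup M H) (kstar H)) := by
  intro k
  induction k using Nat.twoStepInduction with
  | zero => exact H_le_E M H
  | one => exact H_le_E M H
  | more k ih1 ih2 =>
    show mle (trSup (trSup (adjPow H (k + 1)) H) (trMul (adjPow H (k + 1)) H)) _
    exact trSup_mle (trSup_mle ih2 (H_le_E M H))
      (mle_trans (trMul_mono ih2 (mle_refl H)) (E_mul_H hH))

lemma E_mul_adjPow {d : ℕ} {M H : Matrix (Fin d) (Fin d) Rmax} (hH : mcm H ≤ 0) :
    ∀ k, mle (trMul (trMul (trSup M H) (kstar H)) (adjPow H k))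
      (trMul (trSup M H) (kstar H)) := by
  intro k
  induction k using Nat.twoStepInduction with
  | zero => exact E_mul_H hH
  | one => exact E_mul_H hH
  | more k ih1 ih2 =>
    have hunf : adjPow H (k + 2) =
        trSup (trSup (adjPow H (k + 1)) H) (trMul (adjPow H (k + 1)) H) := rfl
    rw [hunf, trMul_trSup_left, trMul_trSup_left]
    refine trSup_mle (trSup_mle ih2 (E_mul_H hH)) ?_
    rw [← trMul_assoc]
    exact mle_trans (trMul_mono ih2 (mle_refl H)) (E_mul_H hH)

theorem key_of_mcm_nonpos {d : ℕ} (M H : Matrix (Fin d) (Fin d) Rmax)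
    (hH : mcm H ≤ 0) (m n : ℕ) (hm : d + 1 ≤ m) (hn : d + 1 ≤ n)
    (A B : Matrix (Fin d) (Fin d) Rmax)
    (hA : A = (sdPow (M, H) m).1) (hB : B = (sdPow (M, H) n).1) :
    trSup (trSup (trSup A B) (adjPow H m)) (trMul B (adjPow H m)) = trSup A B ∧
      trSup A B = trMul (trSup M H) (kstar H) := by
  set E := trMul (trSup M H) (kstar H) with hE
  have hAE : A = E := by
    rw [hA]; exact mle_antisymm (X_le_E hH m) (E_le_X M H m hm)
  have hBE : B = E := by
    rw [hB]; exact mle_antisymm (X_le_E hH n) (E_le_X M H n hn)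
  have hsup : trSup E E = E := mle_antisymm (trSup_mle (mle_refl E) (mle_refl E)) (le_trSup_l E E)
  constructor
  · rw [hAE, hBE]
    apply mle_antisymm
    · refine trSup_mle (trSup_mle ?_ ?_) ?_
      · exact mle_refl _
      · exact mle_trans (adjPow_le_E hH m) (le_trSup_l E E)
      · exact mle_trans (E_mul_adjPow hH m) (le_trSup_l E E)
    · exact mle_trans (le_trSup_l _ _) (le_trSup_l _ _)
  · rw [hAE, hBE, hsup]
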